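/- Let p₁,…,pₙ be holomorphic on the polystrip S_{r₁} ⊂ ℂⁿ, 2π-periodic in each variable, with ‖p‖_{r₁} ≤ r₁δ where 0 < δ < 1/2. Let φ_t(θ) = θ + f(θ,t) be the flow of dθ/dt = p(θ). Then for all |t| ≤ 1: the flow is defined with φ_t(S_{(1-δ)r₁}) ⊆ S_{r₁}, ‖f(·,t)‖_{(1-δ)r₁} ≤ ‖p‖_{r₁}, and ‖f_j(·,t) - t·p_j(·)‖_{(1-2δ)r₁} ≤ n‖p‖_{r₁}²/(r₁δ), and each f_j(·,t) is 2π-periodic. -/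

import Mathlib

open scoped Real

/-- The polystrip `S_ρ ⊂ ℂⁿ` of half-width `ρ`. -/
def polyStrip (n : ℕ) (ρ : ℝ) : Set (Fin n → ℂ) := {θ | ∀ j, |(θ j).im| < ρ}

lemma polyStrip_mono {n : ℕ} {ρ ρ' : ℝ} (h : ρ ≤ ρ') : polyStrip n ρ ⊆ polyStrip n ρ' :=
  fun _ hθ j => lt_of_lt_of_le (hθ j) h

lemma polyStrip_open {n : ℕ} {ρ : ℝ} : IsOpen (polyStrip n ρ) := by
  have : polyStrip n ρ = ⋂ j, (fun θ : Fin n → ℂ => |(θ j).im|) ⁻¹' Set.Iio ρ := by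
    ext θ; simp [polyStrip]
  rw [this]
  exact isOpen_iInter_of_finite fun j =>
    (isOpen_Iio.preimage (by continuity))

lemma polyStrip_convex {n : ℕ} {ρ : ℝ} : Convex ℝ (polyStrip n ρ) := by
  intro x hx y hy a b ha hb hab
  intro j
  have hs : ((a • x + b • y) j).im = a * (x j).im + b * (y j).im := by
    simp [Complex.add_im, Complex.smul_im]
  rw [hs]
  have h1 := abs_lt.mp (hx j)
  have h2 := abs_lt.mp (hy j)
  rw [abs_lt]
  rcases eq_or_lt_of_le hb with hb0 | hb0
  · have hb' : b = 0 := hb0.symm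
    have ha' : a = 1 := by linarith
    subst hb'; subst ha'
    constructor <;> simp <;> linarith
  · constructor <;>
      nlinarith [mul_le_mul_of_nonneg_left h1.2.le ha,
        mul_le_mul_of_nonneg_left h1.1.le ha,
        mul_lt_mul_of_pos_left h2.2 hb0, mul_lt_mul_of_pos_left h2.1 hb0]

lemma strip_fderiv_bound {n : ℕ} {r₁ C ρ b : ℝ} (hC : 0 ≤ C) (hb : 0 < b)
    (hρb : ρ + b ≤ r₁)
    {p : (Fin n → ℂ) → (Fin n → ℂ)}
    (hhol : DifferentiableOn ℂ p (polyStrip n r₁))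
    (hbound : ∀ θ ∈ polyStrip n r₁, ∀ j, ‖p θ j‖ ≤ C) :
    ∀ x ∈ polyStrip n ρ, ∀ h : Fin n → ℂ, ‖fderiv ℂ p x h‖ ≤ C / b * ‖h‖ := by
  have hρr : ρ ≤ r₁ := by linarith
  have hdAt : ∀ x ∈ polyStrip n r₁, DifferentiableAt ℂ p x := fun x hx =>
    hhol.differentiableAt (polyStrip_open.mem_nhds hx)
  have hC' : 0 ≤ C / b := div_nonneg hC hb.le
  intro x hx h
  rcases eq_or_ne h 0 with rfl | hh
  · simp [hC']
  · have hh' : 0 < ‖h‖ := norm_pos_iff.mpr hh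
    set ρh : ℝ := b / ‖h‖ with hρh
    have hρh0 : 0 < ρh := div_pos hb hh'
    set g : ℂ → (Fin n → ℂ) := fun z => p (x + z • h) with hgdef
    have hmem : ∀ z : ℂ, ‖z‖ ≤ ρh → (x + z • h) ∈ polyStrip n r₁ := by
      intro z hz j
      have h1 : |(x j).im| < ρ := hx j
      have h2 : |((z • h) j).im| ≤ b := by
        have h3 : |((z • h) j).im| ≤ ‖(z • h) j‖ := by
          calc |((z • h) j).im| ≤ ‖(z • h) j‖ := Complex.abs_im_le_norm _
            _ = ‖(z • h) j‖ := rfl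
        have h4 : ‖(z • h) j‖ ≤ ‖z • h‖ := norm_le_pi_norm _ j
        have h5 : ‖z • h‖ = ‖z‖ * ‖h‖ := norm_smul z h
        have h6 : ‖z‖ * ‖h‖ ≤ ρh * ‖h‖ := by
          exact mul_le_mul_of_nonneg_right hz (norm_nonneg _)
        have h7 : ρh * ‖h‖ = b := div_mul_cancel₀ b hh'.ne'
        linarith
      have h8 : ((x + z • h) j).im = (x j).im + ((z • h) j).im := by
        simp [Complex.add_im]
      rw [h8]
      calc |(x j).im + ((z • h) j).im| ≤ |(x j).im| + |((z • h) j).im| := abs_add_le _ _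
        _ < ρ + b := by linarith
        _ ≤ r₁ := hρb
    have hgd : DifferentiableOn ℂ g (Metric.closedBall (0:ℂ) ρh) := by
      intro z hz
      have hline : DifferentiableAt ℂ (fun z : ℂ => x + z • h) z :=
        (differentiableAt_id.smul_const h).const_add x
      have hz' : ‖z‖ ≤ ρh := by simpa [Metric.mem_closedBall, dist_zero_right] using hz
      exact ((hdAt _ (hmem z hz')).comp z hline).differentiableWithinAt
    have hgC : ∀ z ∈ Metric.closedBall (0:ℂ) ρh, ‖g z‖ ≤ C := by
      intro z hz
      have hz' : ‖z‖ ≤ ρh := by simpa [Metric.mem_closedBall, dist_zero_right] using hz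
      rw [pi_norm_le_iff_of_nonneg hC]
      exact fun j => hbound _ (hmem z hz') j
    set R : NNReal := ρh.toNNReal with hRdef
    have hRr : (R : ℝ) = ρh := Real.coe_toNNReal _ hρh0.le
    have hR0 : 0 < R := by
      rw [← NNReal.coe_pos, hRr]; exact hρh0
    have hgd' : DifferentiableOn ℂ g (Metric.closedBall (0:ℂ) (R:ℝ)) := by
      rw [hRr]; exact hgd
    have hps : HasFPowerSeriesOnBall g (cauchyPowerSeries g 0 R) 0 R :=
      hgd'.hasFPowerSeriesOnBall hR0
    have hline0 : HasDerivAt (fun z : ℂ => x + z • h) h 0 := by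
      simpa using ((hasDerivAt_id (0:ℂ)).smul_const h).const_add x
    have hpx : HasFDerivAt p (fderiv ℂ p x) (x + (0:ℂ) • h) := by
      simpa using (hdAt x (polyStrip_mono hρr hx)).hasFDerivAt
    have hgder : HasDerivAt g (fderiv ℂ p x h) 0 := hpx.comp_hasDerivAt 0 hline0
    have hderiv_eq : fderiv ℂ p x h = cauchyPowerSeries g 0 R 1 (fun _ => (1:ℂ)) := by
      rw [← hgder.deriv, hps.hasFPowerSeriesAt.deriv]
    have hcont : ContinuousOn (fun θ : ℝ => ‖g (circleMap 0 ρh θ)‖) (Set.Icc 0 (2*π)) := by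
      apply ContinuousOn.norm
      exact hgd.continuousOn.comp (continuous_circleMap 0 _).continuousOn
        (fun θ _ => circleMap_mem_closedBall 0 hρh0.le θ)
    have hint : (∫ θ in (0:ℝ)..2*π, ‖g (circleMap 0 ρh θ)‖) ≤ 2 * π * C := by
      have h1 : (∫ θ in (0:ℝ)..2*π, ‖g (circleMap 0 ρh θ)‖)
          ≤ ∫ _ in (0:ℝ)..2*π, C := by
        apply intervalIntegral.integral_mono_on (by positivity)
        · exact hcont.intervalIntegrable_of_Icc (by positivity)
        · exact intervalIntegrable_const
        · intro θ _
          exact hgC _ (circleMap_mem_closedBall 0 hρh0.le θ)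
      simpa using h1.trans_eq (by simp [mul_comm])
    calc ‖fderiv ℂ p x h‖ = ‖cauchyPowerSeries g 0 R 1 (fun _ => (1:ℂ))‖ := by rw [hderiv_eq]
      _ ≤ ‖cauchyPowerSeries g 0 (R:ℝ) 1‖ * ∏ _i : Fin 1, ‖(1:ℂ)‖ :=
        ContinuousMultilinearMap.le_opNorm _ _
      _ = ‖cauchyPowerSeries g 0 (R:ℝ) 1‖ := by simp
      _ ≤ ((2*π)⁻¹ * ∫ θ in (0:ℝ)..2*π, ‖g (circleMap 0 (R:ℝ) θ)‖) * |(R:ℝ)|⁻¹ ^ 1 :=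
        norm_cauchyPowerSeries_le _ _ _ _
      _ ≤ ((2*π)⁻¹ * (2 * π * C)) * ρh⁻¹ := by
        rw [hRr, abs_of_pos hρh0, pow_one]
        apply mul_le_mul_of_nonneg_right _ (by positivity)
        exact mul_le_mul_of_nonneg_left hint (by positivity)
      _ = C / b * ‖h‖ := by
        rw [hρh]
        field_simp

lemma strip_lip {n : ℕ} {r₁ C ρ b : ℝ} (hC : 0 ≤ C) (hb : 0 < b)
    (hρb : ρ + b ≤ r₁)
    {p : (Fin n → ℂ) → (Fin n → ℂ)}
    (hhol : DifferentiableOn ℂ p (polyStrip n r₁))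
    (hbound : ∀ θ ∈ polyStrip n r₁, ∀ j, ‖p θ j‖ ≤ C) :
    ∀ x ∈ polyStrip n ρ, ∀ y ∈ polyStrip n ρ, ‖p y - p x‖ ≤ C / b * ‖y - x‖ := by
  have key := strip_fderiv_bound hC hb hρb hhol hbound
  have hρr : ρ ≤ r₁ := by linarith
  have hdAt : ∀ x ∈ polyStrip n r₁, DifferentiableAt ℂ p x := fun x hx =>
    hhol.differentiableAt (polyStrip_open.mem_nhds hx)
  intro x hx y hy
  exact polyStrip_convex.norm_image_sub_le_of_norm_hasFDerivWithin_le
    (f' := fun z => (fderiv ℂ p z).restrictScalars ℝ)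
    (fun z hz => (((hdAt z (polyStrip_mono hρr hz)).hasFDerivAt.restrictScalars
      ℝ).hasFDerivWithinAt))
    (fun z hz => ContinuousLinearMap.opNorm_le_bound _ (div_nonneg hC hb.le)
      (fun h => by simpa using key z hz h))
    hx hy

/-- Clamp the imaginary parts into `[-a, a]`. -/
def clampMap (n : ℕ) (a : ℝ) (x : Fin n → ℂ) : Fin n → ℂ :=
  fun j => ⟨(x j).re, max (-a) (min a (x j).im)⟩

lemma clampMap_mem {n : ℕ} {a : ℝ} (ha : 0 ≤ a) (x : Fin n → ℂ) (j : Fin n) :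
    |(clampMap n a x j).im| ≤ a := by
  rw [abs_le]
  constructor
  · exact le_max_left _ _
  · exact max_le (by linarith) (min_le_left _ _)

lemma clampMap_eq_self {n : ℕ} {a : ℝ} {x : Fin n → ℂ} (h : ∀ j, |(x j).im| ≤ a) :
    clampMap n a x = x := by
  funext j
  have h' := abs_le.mp (h j)
  apply Complex.ext
  · rfl
  · show max (-a) (min a (x j).im) = (x j).im
    rw [min_eq_right h'.2, max_eq_right h'.1]

lemma clamp_abs_sub {a u v : ℝ} :
    |max (-a) (min a u) - max (-a) (min a v)| ≤ |u - v| := by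
  calc |max (-a) (min a u) - max (-a) (min a v)|
      = |max (min a u) (-a) - max (min a v) (-a)| := by rw [max_comm, max_comm (-a)]
    _ ≤ |min a u - min a v| := abs_max_sub_max_le_abs _ _ _
    _ ≤ max |a - a| |u - v| := abs_min_sub_min_le_max _ _ _ _
    _ = |u - v| := by simp

lemma clampMap_dist_le {n : ℕ} {a : ℝ} (x y : Fin n → ℂ) :
    dist (clampMap n a x) (clampMap n a y) ≤ dist x y := by
  rw [dist_pi_le_iff dist_nonneg]
  intro j
  refine le_trans ?_ (dist_le_pi_dist x y j)
  rw [Complex.dist_eq_re_im, Complex.dist_eq_re_im]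
  apply Real.sqrt_le_sqrt
  have h1 : (clampMap n a x j).re = (x j).re := rfl
  have h2 : (clampMap n a y j).re = (y j).re := rfl
  rw [h1, h2]
  have h3 : ((clampMap n a x j).im - (clampMap n a y j).im) ^ 2
      ≤ ((x j).im - (y j).im) ^ 2 := by
    have h4 : |(clampMap n a x j).im - (clampMap n a y j).im| ≤ |(x j).im - (y j).im| :=
      clamp_abs_sub
    calc ((clampMap n a x j).im - (clampMap n a y j).im) ^ 2
        = |(clampMap n a x j).im - (clampMap n a y j).im| ^ 2 := (sq_abs _).symm
      _ ≤ |(x j).im - (y j).im| ^ 2 := by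
          exact pow_le_pow_left₀ (abs_nonneg _) h4 2
      _ = ((x j).im - (y j).im) ^ 2 := sq_abs _
  linarith

lemma exists_strip_solution {n : ℕ} (hn : 1 ≤ n) {r₁ δ C : ℝ}
    (hr₁ : 0 < r₁) (hδ0 : 0 < δ) (hδ1 : δ < 1 / 2) (hC0 : 0 < C)
    {p : (Fin n → ℂ) → (Fin n → ℂ)}
    (hhol : DifferentiableOn ℂ p (polyStrip n r₁))
    (hbound : ∀ θ ∈ polyStrip n r₁, ∀ j, ‖p θ j‖ ≤ C)
    (hsmall : C ≤ r₁ * δ)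
    (θ : Fin n → ℂ) (hθ : θ ∈ polyStrip n ((1 - δ) * r₁)) :
    ∃ (f : ℝ → (Fin n → ℂ)) (T a : ℝ), 1 < T ∧ a < r₁ ∧ f 0 = θ ∧
      ∀ t ∈ Set.Icc (-T) T,
        HasDerivWithinAt f (p (f t)) (Set.Icc (-T) T) t ∧
        ‖f t - θ‖ ≤ C * |t| ∧ ∀ j, |(f t j).im| ≤ a := by
  haveI hne : Nonempty (Fin n) := ⟨⟨0, hn⟩⟩
  set m : ℝ := Finset.univ.sup' (Finset.univ_nonempty) (fun j => |(θ j).im|) with hmdef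
  have hm_lt : m < (1 - δ) * r₁ := by
    rw [hmdef, Finset.sup'_lt_iff]
    exact fun j _ => hθ j
  have hm_le : ∀ j, |(θ j).im| ≤ m := fun j => by
    rw [hmdef]; exact Finset.le_sup' (fun j => |(θ j).im|) (Finset.mem_univ j)
  have hm0 : 0 ≤ m := le_trans (abs_nonneg _) (hm_le ⟨0, hn⟩)
  have hmC : m + C < r₁ := by nlinarith
  set a : ℝ := (m + C + r₁) / 2 with hadef
  have ha1 : a < r₁ := by rw [hadef]; linarith
  have ha0 : 0 ≤ a := by rw [hadef]; linarith
  set T : ℝ := (a - m) / C with hTdef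
  have hT1 : 1 < T := by
    rw [hTdef, lt_div_iff₀ hC0, one_mul, hadef]; linarith
  have hTa : m + C * T = a := by
    rw [hTdef]; field_simp; ring
  have hT0 : 0 < T := by linarith
  -- the truncated vector field
  set q : (Fin n → ℂ) → (Fin n → ℂ) := fun x => p (clampMap n a x) with hqdef
  set bL : ℝ := (r₁ - a) / 2 with hbLdef
  have hbL : 0 < bL := by rw [hbLdef]; linarith
  set ρL : ℝ := (a + r₁) / 2 with hρLdef
  have hρLbL : ρL + bL ≤ r₁ := by rw [hρLdef, hbLdef]; linarith
  have haρL : a < ρL := by rw [hρLdef]; linarith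
  have hclampmem : ∀ x : Fin n → ℂ, clampMap n a x ∈ polyStrip n ρL :=
    fun x j => lt_of_le_of_lt (clampMap_mem ha0 x j) haρL
  have hclampr₁ : ∀ x : Fin n → ℂ, clampMap n a x ∈ polyStrip n r₁ :=
    fun x j => lt_of_le_of_lt (clampMap_mem ha0 x j) ha1
  have hlip0 := strip_lip hC0.le hbL hρLbL hhol hbound
  set K : NNReal := (C / bL).toNNReal with hKdef
  have hKco : (K : ℝ) = C / bL := Real.coe_toNNReal _ (div_nonneg hC0.le hbL.le)
  have hlipW : LipschitzWith K q := by
    apply LipschitzWith.of_dist_le_mul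
    intro x y
    rw [hKco, dist_eq_norm, dist_eq_norm]
    calc ‖q x - q y‖ ≤ C / bL * ‖clampMap n a x - clampMap n a y‖ :=
          hlip0 _ (hclampmem y) _ (hclampmem x)
      _ ≤ C / bL * ‖x - y‖ := by
          apply mul_le_mul_of_nonneg_left _ (div_nonneg hC0.le hbL.le)
          rw [← dist_eq_norm, ← dist_eq_norm]
          exact clampMap_dist_le x y
  have hqC : ∀ x : Fin n → ℂ, ‖q x‖ ≤ C := by
    intro x
    rw [pi_norm_le_iff_of_nonneg hC0.le]
    exact fun j => hbound _ (hclampr₁ x) j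
  have hpl : IsPicardLindelof (fun _ x => q x) (tmin := -T) (tmax := T)
      ⟨0, by constructor <;> linarith⟩ θ (C * T).toNNReal 0 C.toNNReal K :=
    { lipschitzOnWith := fun t _ => hlipW.lipschitzOnWith
      continuousOn := fun x _ => continuousOn_const
      norm_le := fun t _ x _ => by rw [Real.coe_toNNReal _ hC0.le]; exact hqC x
      mul_max_le := by
        show (C.toNNReal : ℝ) * max (T - 0) (0 - -T) ≤ ((C * T).toNNReal : ℝ) - ((0 : NNReal) : ℝ)
        rw [Real.coe_toNNReal _ hC0.le, Real.coe_toNNReal _ (by positivity)]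
        simp }
  obtain ⟨f, hf0', hfd'⟩ := hpl.exists_eq_forall_mem_Icc_hasDerivWithinAt₀
  have hf0 : f 0 = θ := hf0'
  have hfd : ∀ t ∈ Set.Icc (-T) T, HasDerivWithinAt f (q (f t)) (Set.Icc (-T) T) t := hfd'
  have hbnd : ∀ t ∈ Set.Icc (-T) T, ‖f t - θ‖ ≤ C * |t| := by
    intro t ht
    have h0T : (0 : ℝ) ∈ Set.Icc (-T) T := ⟨by linarith, by linarith⟩
    have := (convex_Icc (-T) T).norm_image_sub_le_of_norm_hasDerivWithin_le
      (f' := fun s => q (f s)) (fun s hs => hfd s hs) (fun s _ => hqC _) h0T ht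
    rw [hf0] at this
    simpa [Real.norm_eq_abs] using this
  have him : ∀ t ∈ Set.Icc (-T) T, ∀ j, |(f t j).im| ≤ a := by
    intro t ht j
    have h1 : (f t j).im = (θ j).im + ((f t - θ) j).im := by
      simp [Complex.sub_im]
    have h2 : |((f t - θ) j).im| ≤ ‖f t - θ‖ := by
      calc |((f t - θ) j).im| ≤ ‖(f t - θ) j‖ := Complex.abs_im_le_norm _
        _ = ‖(f t - θ) j‖ := rfl
        _ ≤ ‖f t - θ‖ := norm_le_pi_norm _ j
    have h3 : |t| ≤ T := abs_le.mpr ⟨ht.1, ht.2⟩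
    have h4 : C * |t| ≤ C * T := mul_le_mul_of_nonneg_left h3 hC0.le
    calc |(f t j).im| ≤ |(θ j).im| + |((f t - θ) j).im| := h1 ▸ abs_add_le _ _
      _ ≤ m + C * |t| := add_le_add (hm_le j) (le_trans h2 (hbnd t ht))
      _ ≤ m + C * T := by linarith
      _ = a := hTa
  refine ⟨f, T, a, hT1, ha1, hf0, fun t ht => ⟨?_, hbnd t ht, him t ht⟩⟩
  have hfix : q (f t) = p (f t) := by
    rw [hqdef]
    simp only
    rw [clampMap_eq_self (him t ht)]
  exact hfix ▸ hfd t ht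

/-- Estimates for the flow of a small `2π`-periodic holomorphic vector field on a polystrip
(Lemma on flows): the flow `φ_t(θ) = θ + f(θ,t)` exists for `|t| ≤ 1`, maps `S_{(1-δ)r₁}`
into `S_{r₁}` with `‖f(·,t)‖ ≤ ‖p‖_{r₁}`, is `2π`-periodic, and
`‖f_j(·,t) - t p_j‖_{(1-2δ)r₁} ≤ n ‖p‖_{r₁}²/(r₁ δ)`. -/
theorem flow_estimates_on_strip (n : ℕ) (hn : 1 ≤ n) (r₁ δ C : ℝ)
    (hr₁ : 0 < r₁) (hδ0 : 0 < δ) (hδ1 : δ < 1 / 2)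
    (p : (Fin n → ℂ) → (Fin n → ℂ))
    (hhol : DifferentiableOn ℂ p (polyStrip n r₁))
    (hper : ∀ θ : Fin n → ℂ, ∀ j k : Fin n,
      p (fun i => θ i + if i = j then (2 * π : ℂ) else 0) k = p θ k)
    (hbound : ∀ θ ∈ polyStrip n r₁, ∀ j, ‖p θ j‖ ≤ C)
    (hsmall : C ≤ r₁ * δ) :
    ∃ φ : ℝ → (Fin n → ℂ) → (Fin n → ℂ),
      (∀ θ ∈ polyStrip n ((1 - δ) * r₁), φ 0 θ = θ) ∧
      (∀ θ ∈ polyStrip n ((1 - δ) * r₁), ∀ t ∈ Set.Icc (-1 : ℝ) 1,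
        HasDerivAt (fun s => φ s θ) (p (φ t θ)) t ∧
        φ t θ ∈ polyStrip n r₁ ∧
        ∀ j, ‖φ t θ j - θ j‖ ≤ C) ∧
      (∀ θ ∈ polyStrip n ((1 - δ) * r₁), ∀ t ∈ Set.Icc (-1 : ℝ) 1, ∀ j k : Fin n,
        φ t (fun i => θ i + if i = j then (2 * π : ℂ) else 0) k
          = φ t θ k + if k = j then (2 * π : ℂ) else 0) ∧
      (∀ θ ∈ polyStrip n ((1 - 2 * δ) * r₁), ∀ t ∈ Set.Icc (-1 : ℝ) 1, ∀ j,
        ‖φ t θ j - θ j - t • p θ j‖ ≤ n * C ^ 2 / (r₁ * δ)) := by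
  classical
  have hsub_r₁ : polyStrip n ((1 - δ) * r₁) ⊆ polyStrip n r₁ :=
    polyStrip_mono (by nlinarith)
  have hsub_2δ : polyStrip n ((1 - 2 * δ) * r₁) ⊆ polyStrip n ((1 - δ) * r₁) :=
    polyStrip_mono (by nlinarith)
  have h0mem : (0 : Fin n → ℂ) ∈ polyStrip n r₁ := by
    intro j; simpa using hr₁
  have hC0 : 0 ≤ C := le_trans (norm_nonneg _) (hbound 0 h0mem ⟨0, hn⟩)
  rcases hC0.eq_or_lt with hC | hC0
  · -- trivial case C = 0
    have hp0 : ∀ θ ∈ polyStrip n r₁, p θ = 0 := by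
      intro θ hθ
      funext j
      have := hbound θ hθ j
      rw [← hC] at this
      simpa using norm_le_zero_iff.mp this
    refine ⟨fun _ θ => θ, fun θ _ => rfl, ?_, ?_, ?_⟩
    · intro θ hθ t _
      refine ⟨?_, hsub_r₁ hθ, ?_⟩
      · rw [hp0 θ (hsub_r₁ hθ)]
        exact hasDerivAt_const t θ
      · intro j; simp [← hC]
    · intro θ _ t _ j k; rfl
    · intro θ hθ t _ j
      rw [hp0 θ (hsub_r₁ (hsub_2δ hθ))]
      simp [← hC]
  · -- main case C > 0
    have ex := fun θ hθ =>
      exists_strip_solution hn hr₁ hδ0 hδ1 hC0 hhol hbound hsmall θ hθ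
    choose! f T a hT1 ha1 hf0 hsol using ex
    have hsub1 : ∀ θ, θ ∈ polyStrip n ((1 - δ) * r₁) →
        Set.Icc (-1 : ℝ) 1 ⊆ Set.Icc (-(T θ)) (T θ) := by
      intro θ hθ
      have := hT1 θ hθ
      exact Set.Icc_subset_Icc (by linarith) (by linarith)
    have hbnd1 : ∀ θ, θ ∈ polyStrip n ((1 - δ) * r₁) → ∀ t ∈ Set.Icc (-1 : ℝ) 1,
        ‖f θ t - θ‖ ≤ C := by
      intro θ hθ t ht
      have h1 := (hsol θ hθ t (hsub1 θ hθ ht)).2.1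
      have h2 : |t| ≤ 1 := abs_le.mpr ⟨ht.1, ht.2⟩
      calc ‖f θ t - θ‖ ≤ C * |t| := h1
        _ ≤ C * 1 := mul_le_mul_of_nonneg_left h2 hC0.le
        _ = C := mul_one C
    have hcoord : ∀ (θ : Fin n → ℂ) (t : ℝ) (j : Fin n),
        ‖f θ t j - θ j‖ ≤ ‖f θ t - θ‖ := by
      intro θ t j
      have := norm_le_pi_norm (f θ t - θ) j
      simpa using this
    have himabs : ∀ (θ : Fin n → ℂ) (t : ℝ) (j : Fin n),
        |(f θ t j).im| ≤ |(θ j).im| + ‖f θ t - θ‖ := by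
      intro θ t j
      have h1 : (f θ t j).im = (θ j).im + (f θ t j - θ j).im := by
        simp [Complex.sub_im]
      have h2 : |(f θ t j - θ j).im| ≤ ‖f θ t j - θ j‖ := by
        calc |(f θ t j - θ j).im| ≤ ‖f θ t j - θ j‖ := Complex.abs_im_le_norm _
          _ = ‖f θ t j - θ j‖ := rfl
      calc |(f θ t j).im| ≤ |(θ j).im| + |(f θ t j - θ j).im| := h1 ▸ abs_add_le _ _
        _ ≤ |(θ j).im| + ‖f θ t - θ‖ := by
            have := hcoord θ t j; linarith
    refine ⟨fun t θ => f θ t, fun θ hθ => hf0 θ hθ, ?_, ?_, ?_⟩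
    · -- derivative, strip membership, coordinate bound
      intro θ hθ t ht
      have hT := hT1 θ hθ
      refine ⟨?_, ?_, ?_⟩
      · exact ((hsol θ hθ t (hsub1 θ hθ ht)).1).hasDerivAt
          (Icc_mem_nhds (by linarith [ht.1]) (by linarith [ht.2]))
      · intro j
        have h1 := himabs θ t j
        have h2 := hbnd1 θ hθ t ht
        have h3 := hθ j
        have h4 : (1 - δ) * r₁ + C ≤ r₁ := by nlinarith
        calc |(f θ t j).im| ≤ |(θ j).im| + ‖f θ t - θ‖ := h1
          _ < (1 - δ) * r₁ + C := by linarith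
          _ ≤ r₁ := h4
      · intro j
        exact le_trans (hcoord θ t j) (hbnd1 θ hθ t ht)
    · -- periodicity
      intro θ hθ t ht j k
      set c : Fin n → ℂ := fun i => if i = j then (2 * π : ℂ) else 0 with hcdef
      have hcim : ∀ i, (c i).im = 0 := by
        intro i
        rw [hcdef]
        by_cases h : i = j <;> simp [h]
      set θ' : Fin n → ℂ := fun i => θ i + c i with hθ'def
      have hθ'im : ∀ i, (θ' i).im = (θ i).im := by
        intro i
        rw [hθ'def]
        simp [Complex.add_im, hcim i]
      have hθ'mem : θ' ∈ polyStrip n ((1 - δ) * r₁) := by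
        intro i; rw [hθ'im i]; exact hθ i
      set g : ℝ → (Fin n → ℂ) := fun u => f θ u + c with hgdef
      set T₀ : ℝ := min (T θ) (T θ') with hT₀def
      have hT₀1 : 1 < T₀ := lt_min (hT1 θ hθ) (hT1 θ' hθ'mem)
      have hsubθ : Set.Icc (-T₀) T₀ ⊆ Set.Icc (-(T θ)) (T θ) :=
        Set.Icc_subset_Icc (neg_le_neg (min_le_left _ _)) (min_le_left _ _)
      have hsubθ' : Set.Icc (-T₀) T₀ ⊆ Set.Icc (-(T θ')) (T θ') :=
        Set.Icc_subset_Icc (neg_le_neg (min_le_right _ _)) (min_le_right _ _)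
      set A : ℝ := max (a θ) (a θ') with hAdef
      have hA1 : A < r₁ := max_lt (ha1 θ hθ) (ha1 θ' hθ'mem)
      set s : Set (Fin n → ℂ) := {x | ∀ i, |(x i).im| ≤ A} with hsdef
      have hssub : s ⊆ polyStrip n ((A + r₁) / 2) := fun x hx i =>
        lt_of_le_of_lt (hx i) (by linarith)
      have hb2 : (0:ℝ) < (r₁ - A) / 2 := by linarith
      have hρb2 : (A + r₁) / 2 + (r₁ - A) / 2 ≤ r₁ := by linarith
      have hlip := strip_lip hC0.le hb2 hρb2 hhol hbound
      set K : NNReal := (C / ((r₁ - A) / 2)).toNNReal with hKdef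
      have hKco : (K : ℝ) = C / ((r₁ - A) / 2) :=
        Real.coe_toNNReal _ (div_nonneg hC0.le hb2.le)
      have hv : ∀ u : ℝ, LipschitzOnWith K (fun x => p x) s := by
        intro u
        apply LipschitzOnWith.of_dist_le_mul
        intro x hx y hy
        rw [hKco, dist_eq_norm, dist_eq_norm]
        exact hlip _ (hssub hy) _ (hssub hx)
      have hfθd : ∀ u ∈ Set.Ioo (-T₀) T₀, HasDerivAt (f θ) (p (f θ u)) u := by
        intro u hu
        have h1 := (hsol θ hθ u (hsubθ ⟨hu.1.le, hu.2.le⟩)).1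
        exact h1.hasDerivAt (Icc_mem_nhds
          (lt_of_le_of_lt (neg_le_neg (min_le_left _ _)) hu.1)
          (lt_of_lt_of_le hu.2 (min_le_left _ _)))
      have hfθ'd : ∀ u ∈ Set.Ioo (-T₀) T₀, HasDerivAt (f θ') (p (f θ' u)) u := by
        intro u hu
        have h1 := (hsol θ' hθ'mem u (hsubθ' ⟨hu.1.le, hu.2.le⟩)).1
        exact h1.hasDerivAt (Icc_mem_nhds
          (lt_of_le_of_lt (neg_le_neg (min_le_right _ _)) hu.1)
          (lt_of_lt_of_le hu.2 (min_le_right _ _)))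
      have hgd : ∀ u ∈ Set.Ioo (-T₀) T₀, HasDerivAt g (p (g u)) u := by
        intro u hu
        have h1 := (hfθd u hu).add_const c
        have h2 : p (g u) = p (f θ u) := by
          funext k'
          exact hper (f θ u) j k'
        rw [h2]
        exact h1
      have hfθ'mem : ∀ u ∈ Set.Ioo (-T₀) T₀, f θ' u ∈ s := by
        intro u hu i
        exact le_trans ((hsol θ' hθ'mem u (hsubθ' ⟨hu.1.le, hu.2.le⟩)).2.2 i)
          (le_max_right _ _)
      have hgmem : ∀ u ∈ Set.Ioo (-T₀) T₀, g u ∈ s := by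
        intro u hu i
        have h1 : (g u i).im = (f θ u i).im := by
          rw [hgdef]; simp [Complex.add_im, hcim i]
        rw [h1]
        exact le_trans ((hsol θ hθ u (hsubθ ⟨hu.1.le, hu.2.le⟩)).2.2 i)
          (le_max_left _ _)
      have hcfθ' : ContinuousOn (f θ') (Set.Icc (-T₀) T₀) := by
        intro u hu
        exact (((hsol θ' hθ'mem u (hsubθ' hu)).1).continuousWithinAt).mono hsubθ'
      have hcg : ContinuousOn g (Set.Icc (-T₀) T₀) := by
        apply ContinuousOn.add _ continuousOn_const
        intro u hu
        exact (((hsol θ hθ u (hsubθ hu)).1).continuousWithinAt).mono hsubθ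
      have heq0 : f θ' 0 = g 0 := by
        rw [hgdef]
        simp only
        rw [hf0 θ' hθ'mem, hf0 θ hθ]
        funext i
        rfl
      have hEq := ODE_solution_unique_of_mem_Icc (fun u _ => hv u)
        (Set.mem_Ioo.mpr ⟨by linarith, by linarith⟩)
        hcfθ' hfθ'd hfθ'mem hcg hgd hgmem heq0
      have htmem : t ∈ Set.Icc (-T₀) T₀ := ⟨by linarith [ht.1], by linarith [ht.2]⟩
      exact congrFun (hEq htmem) k
    · -- the quantitative estimate
      intro θ hθ2 t ht j
      have hθ := hsub_2δ hθ2
      set b : ℝ := δ * r₁ with hbdef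
      have hb : 0 < b := by positivity
      have hρb : (1 - δ) * r₁ + b ≤ r₁ := by rw [hbdef]; ring_nf; linarith
      have hlip := strip_lip hC0.le hb hρb hhol hbound
      have hmemθ : θ ∈ polyStrip n ((1 - δ) * r₁) := hθ
      have hmemf : ∀ u ∈ Set.Icc (-1:ℝ) 1, f θ u ∈ polyStrip n ((1 - δ) * r₁) := by
        intro u hu i
        have h1 := himabs θ u i
        have h2 := hbnd1 θ hθ u hu
        have h3 := hθ2 i
        have h4 : (1 - 2 * δ) * r₁ + C ≤ (1 - δ) * r₁ := by nlinarith
        calc |(f θ u i).im| ≤ |(θ i).im| + ‖f θ u - θ‖ := h1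
          _ < (1 - 2 * δ) * r₁ + C := by linarith
          _ ≤ (1 - δ) * r₁ := h4
      set F : ℝ → (Fin n → ℂ) := fun u => f θ u - θ - u • p θ with hFdef
      have hFd : ∀ u ∈ Set.Icc (-1:ℝ) 1,
          HasDerivWithinAt F (p (f θ u) - p θ) (Set.Icc (-1:ℝ) 1) u := by
        intro u hu
        have h1 : HasDerivWithinAt (f θ) (p (f θ u)) (Set.Icc (-1:ℝ) 1) u :=
          ((hsol θ hθ u (hsub1 θ hθ hu)).1).mono (hsub1 θ hθ)
        have h2 : HasDerivWithinAt (fun u : ℝ => u • p θ) (p θ) (Set.Icc (-1:ℝ) 1) u := by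
          have := (hasDerivAt_id u).smul_const (p θ)
          simpa using this.hasDerivWithinAt
        exact (h1.sub_const θ).sub h2
      have hFbound : ∀ u ∈ Set.Icc (-1:ℝ) 1, ‖p (f θ u) - p θ‖ ≤ C / b * C := by
        intro u hu
        calc ‖p (f θ u) - p θ‖ ≤ C / b * ‖f θ u - θ‖ :=
              hlip θ hmemθ (f θ u) (hmemf u hu)
          _ ≤ C / b * C := mul_le_mul_of_nonneg_left (hbnd1 θ hθ u hu)
              (div_nonneg hC0.le hb.le)
      have h0mem1 : (0:ℝ) ∈ Set.Icc (-1:ℝ) 1 := ⟨by norm_num, by norm_num⟩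
      have hMV := (convex_Icc (-1:ℝ) 1).norm_image_sub_le_of_norm_hasDerivWithin_le
        (f' := fun u => p (f θ u) - p θ) hFd hFbound h0mem1 ht
      have hF0 : F 0 = 0 := by
        rw [hFdef]
        simp only
        rw [hf0 θ hθ]
        simp
      rw [hF0] at hMV
      have hFt : ‖F t‖ ≤ C / b * C := by
        have h5 : ‖t - 0‖ ≤ 1 := by
          rw [sub_zero, Real.norm_eq_abs]
          exact abs_le.mpr ⟨ht.1, ht.2⟩
        calc ‖F t‖ = ‖F t - 0‖ := by rw [sub_zero]
          _ ≤ C / b * C * ‖t - 0‖ := hMV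
          _ ≤ C / b * C * 1 := by
              apply mul_le_mul_of_nonneg_left h5 (by positivity)
          _ = C / b * C := mul_one _
      have hcoordF : ‖f θ t j - θ j - t • p θ j‖ ≤ ‖F t‖ := by
        have := norm_le_pi_norm (F t) j
        simpa [hFdef] using this
      have hfinal : C / b * C ≤ n * C ^ 2 / (r₁ * δ) := by
        rw [hbdef]
        have hn' : (1:ℝ) ≤ (n:ℝ) := by exact_mod_cast hn
        rw [div_mul_eq_mul_div, div_le_div_iff₀ (by positivity) (by positivity)]
        have hcc : C * C = C ^ 2 := (sq C).symm
        nlinarith [mul_nonneg (mul_nonneg (sub_nonneg.mpr hn') (sq_nonneg C))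
          (mul_pos hδ0 hr₁).le]
      exact le_trans hcoordF (le_trans hFt hfinal)
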